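/- Every zero-dimensional system is topologically conjugate to the inverse limit of some sequence of covers: if X is a non-empty compact metrizable zero-dimensional space and f : X → X is a continuous surjection, then there exists a sequence 𝒢 of covers G₀ ←φ₀− G₁ ←φ₁− ⋯ and a homeomorphism h : X → V_𝒢 such that h ∘ f = g ∘ h, where g is the continuous surjection of V_𝒢 determined by E_𝒢. -/
import Mathlib


open Filter Topology
open scoped ENNReal

/-- `φ` is a graph homomorphism from `(V₁,E₁)` to `(V₂,E₂)`. -/
def IsGraphHom {V₁ V₂ : Type*} (E₁ : V₁ → V₁ → Prop) (E₂ : V₂ → V₂ → Prop)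
    (φ : V₁ → V₂) : Prop :=
  ∀ u v, E₁ u v → E₂ (φ u) (φ v)

/-- `φ` is edge surjective. -/
def IsEdgeSurj {V₁ V₂ : Type*} (E₁ : V₁ → V₁ → Prop) (E₂ : V₂ → V₂ → Prop)
    (φ : V₁ → V₂) : Prop :=
  ∀ u v, E₂ u v → ∃ u' v', E₁ u' v' ∧ φ u' = u ∧ φ v' = v

/-- `φ` is +directional. -/
def IsPlusDirectional {V₁ V₂ : Type*} (E₁ : V₁ → V₁ → Prop) (φ : V₁ → V₂) : Prop :=
  ∀ u v v', E₁ u v → E₁ u v' → φ v = φ v'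

/-- `φ` is bidirectional. -/
def IsBidirectional {V₁ V₂ : Type*} (E₁ : V₁ → V₁ → Prop) (φ : V₁ → V₂) : Prop :=
  IsPlusDirectional E₁ φ ∧ ∀ u u' v, E₁ u v → E₁ u' v → φ u = φ u'

/-- `φ` is a cover: a +directional edge-surjective graph homomorphism. -/
def IsCover {V₁ V₂ : Type*} (E₁ : V₁ → V₁ → Prop) (E₂ : V₂ → V₂ → Prop)
    (φ : V₁ → V₂) : Prop :=
  IsGraphHom E₁ E₂ φ ∧ IsPlusDirectional E₁ φ ∧ IsEdgeSurj E₁ E₂ φ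

/-- every vertex has an incoming and an outgoing edge. -/
def IsSurjDigraph {V : Type*} (E : V → V → Prop) : Prop :=
  (∀ v, ∃ u, E u v) ∧ ∀ u, ∃ v, E u v

/-- the inverse limit `V_𝒢` of a sequence of graph maps. -/
abbrev InvLim (V : ℕ → Type*) (φ : ∀ n, V (n + 1) → V n) : Type _ :=
  { x : ∀ n, V n // ∀ n, φ n (x (n + 1)) = x n }

/-- the relation `E_𝒢` on `V_𝒢`. -/
def ERel {V : ℕ → Type*} (E : ∀ n, V n → V n → Prop) (φ : ∀ n, V (n + 1) → V n)
    (x y : InvLim V φ) : Prop :=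
  ∀ n, E n (x.1 n) (y.1 n)

/-- the product-of-discrete topology on the inverse limit, given explicitly. -/
def invLimTop (V : ℕ → Type*) (φ : ∀ n, V (n + 1) → V n) :
    TopologicalSpace (InvLim V φ) :=
  @instTopologicalSpaceSubtype _ _ (@Pi.topologicalSpace ℕ V fun _ => ⊥)

/-- the distance function of an explicitly given metric space structure. -/
noncomputable def mdist {X : Type*} (m : MetricSpace X) (x y : X) : ℝ :=
  @dist X m.toDist x y

/-- the topology induced by an explicitly given metric space structure. -/
def mtop {X : Type*} (m : MetricSpace X) : TopologicalSpace X :=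
  @UniformSpace.toTopologicalSpace X m.toUniformSpace

/-- the (half-open) list of vertices `vtx i 0, vtx i 1, …, vtx i (len-1)` of
the circuit `c_{n,i}`, the final vertex (equal to the initial one) omitted. -/
def circList {Vn : Type*} (vtx : ℕ → ℕ → Vn) (i len : ℕ) : List Vn :=
  List.ofFn fun j : Fin len => vtx i (j : ℕ)


/-- the raw vertex types -/
def Wt (F : ℕ → Type) : ℕ → Type
  | 0 => F 0
  | n+1 => F (n+1) × Wt F n × Wt F n

def wtFintype (F : ℕ → Type) (hF : ∀ n, Fintype (F n)) : ∀ n, Fintype (Wt F n)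
  | 0 => hF 0
  | n+1 => @instFintypeProd _ _ (hF (n+1))
      (@instFintypeProd _ _ (wtFintype F hF n) (wtFintype F hF n))

def praw {X : Type} (F : ℕ → Type) (f : X → X) (q : ∀ n, X → F n) : ∀ n, X → Wt F n
  | 0 => q 0
  | n+1 => fun x => (q (n+1) x, praw F f q n x, praw F f q n (f x))

def Vt {X : Type} (F : ℕ → Type) (f : X → X) (q : ∀ n, X → F n) (n : ℕ) : Type :=
  {w : Wt F n // ∃ x, praw F f q n x = w}

def pmap {X : Type} (F : ℕ → Type) (f : X → X) (q : ∀ n, X → F n) (n : ℕ) (x : X) :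
    Vt F f q n := ⟨praw F f q n x, x, rfl⟩

def φmap {X : Type} (F : ℕ → Type) (f : X → X) (q : ∀ n, X → F n) (n : ℕ)
    (v : Vt F f q (n+1)) : Vt F f q n :=
  ⟨(show F (n+1) × Wt F n × Wt F n from v.1).2.1, by
    obtain ⟨x, hx⟩ := v.2; exact ⟨x, by rw [← hx]; rfl⟩⟩

def ψmap {X : Type} (F : ℕ → Type) (f : X → X) (q : ∀ n, X → F n) (n : ℕ)
    (v : Vt F f q (n+1)) : Vt F f q n :=
  ⟨(show F (n+1) × Wt F n × Wt F n from v.1).2.2, by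
    obtain ⟨x, hx⟩ := v.2; exact ⟨f x, by rw [← hx]; rfl⟩⟩

lemma φmap_pmap {X : Type} (F : ℕ → Type) (f : X → X) (q : ∀ n, X → F n) (n : ℕ) (x : X) :
    φmap F f q n (pmap F f q (n+1) x) = pmap F f q n x := rfl

lemma ψmap_pmap {X : Type} (F : ℕ → Type) (f : X → X) (q : ∀ n, X → F n) (n : ℕ) (x : X) :
    ψmap F f q n (pmap F f q (n+1) x) = pmap F f q n (f x) := rfl

def Edge {X : Type} (F : ℕ → Type) (f : X → X) (q : ∀ n, X → F n) (n : ℕ)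
    (u v : Vt F f q n) : Prop :=
  ∃ x, pmap F f q n x = u ∧ pmap F f q n (f x) = v

lemma pmap_surj {X : Type} (F : ℕ → Type) (f : X → X) (q : ∀ n, X → F n) (n : ℕ)
    (v : Vt F f q n) : ∃ x, pmap F f q n x = v := by
  obtain ⟨w, x, hx⟩ := v
  exact ⟨x, Subtype.ext hx⟩

lemma praw_q {X : Type} (F : ℕ → Type) (f : X → X) (q : ∀ n, X → F n) :
    ∀ (n : ℕ) (x y : X), praw F f q n x = praw F f q n y → q n x = q n y
  | 0, x, y, h => h
  | n+1, x, y, h => congrArg Prod.fst h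

lemma praw_fiber_open {X : Type} [TopologicalSpace X] (F : ℕ → Type) (f : X → X)
    (q : ∀ n, X → F n) (hf : Continuous f)
    (hq : ∀ n i, IsOpen {x | q n x = i}) :
    ∀ (n : ℕ) (w : Wt F n), IsOpen {x | praw F f q n x = w}
  | 0, w => hq 0 w
  | n+1, w => by
    obtain ⟨a, b, c⟩ := w
    have he : {x | praw F f q (n+1) x = (a, b, c)} =
        {x | q (n+1) x = a} ∩ ({x | praw F f q n x = b} ∩
          f ⁻¹' {x | praw F f q n x = c}) := by
      ext x
      constructor
      · intro h
        have h' : praw F f q (n+1) x = (a, b, c) := h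
        exact ⟨congrArg Prod.fst h',
          congrArg (fun p : F (n+1) × Wt F n × Wt F n => p.2.1) h',
          congrArg (fun p : F (n+1) × Wt F n × Wt F n => p.2.2) h'⟩
      · rintro ⟨h1, h2, h3⟩
        show praw F f q (n+1) x = (a, b, c)
        rw [show praw F f q (n+1) x =
          (q (n+1) x, praw F f q n x, praw F f q n (f x)) from rfl, h1, h2, h3]
    rw [he]
    exact (hq _ _).inter ((praw_fiber_open F f q hf hq n b).inter
      ((praw_fiber_open F f q hf hq n c).preimage hf))

lemma praw_fiber_closed {X : Type} [TopologicalSpace X] (F : ℕ → Type) (f : X → X)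
    (q : ∀ n, X → F n) (hf : Continuous f)
    (hq : ∀ n i, IsOpen {x | q n x = i}) (n : ℕ) (w : Wt F n) :
    IsClosed {x | praw F f q n x = w} := by
  rw [← isOpen_compl_iff]
  have : {x | praw F f q n x = w}ᶜ = ⋃ w', ⋃ _ : w' ≠ w, {x | praw F f q n x = w'} := by
    ext x
    simp only [Set.mem_compl_iff, Set.mem_setOf_eq, Set.mem_iUnion]
    constructor
    · intro h; exact ⟨praw F f q n x, h, rfl⟩
    · rintro ⟨w', hne, h⟩; rw [h]; exact hne
  rw [this]
  exact isOpen_iUnion fun w' => isOpen_iUnion fun _ => praw_fiber_open F f q hf hq n w'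

lemma exists_fine_part (X : Type) [MetricSpace X] [CompactSpace X]
    (hX : TopologicalSpace.IsTopologicalBasis {s : Set X | IsClopen s})
    (ε : ℝ) (hε : 0 < ε) :
    ∃ (F : Type) (_ : Fintype F) (q : X → F),
      (∀ i, IsOpen {x | q x = i}) ∧ ∀ x y, q x = q y → dist x y ≤ ε := by
  classical
  have H : ∀ c : X, ∃ s : Set X, IsClopen s ∧ c ∈ s ∧ s ⊆ Metric.ball c (ε/2) := by
    intro c
    obtain ⟨s, hs, hcs, hsub⟩ := hX.exists_subset_of_mem_open
      (show c ∈ Metric.ball c (ε/2) from Metric.mem_ball_self (by positivity))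
      Metric.isOpen_ball
    exact ⟨s, hs, hcs, hsub⟩
  choose s hs hmem hsub using H
  obtain ⟨t, ht⟩ := IsCompact.elim_finite_subcover isCompact_univ s
    (fun c => (hs c).2) (by intro x _; exact Set.mem_iUnion.mpr ⟨x, hmem x⟩)
  let e : Fin (Fintype.card {c // c ∈ t}) ≃ {c // c ∈ t} :=
    (Fintype.equivFin {c // c ∈ t}).symm
  have cov : ∀ x : X, ((Finset.univ : Finset (Fin (Fintype.card {c // c ∈ t}))).filter
      (fun j => x ∈ s (e j))).Nonempty := by
    intro x
    obtain ⟨c, hc, hxc⟩ := Set.mem_iUnion₂.mp (ht (Set.mem_univ x))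
    refine ⟨e.symm ⟨c, hc⟩, Finset.mem_filter.mpr ⟨Finset.mem_univ _, ?_⟩⟩
    simpa using hxc
  let Q : X → Fin (Fintype.card {c // c ∈ t}) :=
    fun x => (Finset.univ.filter (fun j => x ∈ s (e j))).min' (cov x)
  have hQmem : ∀ x, x ∈ s (e (Q x)) :=
    fun x => (Finset.mem_filter.mp (Finset.min'_mem _ (cov x))).2
  have hQle : ∀ x j, x ∈ s (e j) → Q x ≤ j :=
    fun x j hj => Finset.min'_le _ j (Finset.mem_filter.mpr ⟨Finset.mem_univ _, hj⟩)
  refine ⟨Fin (Fintype.card {c // c ∈ t}), inferInstance, Q, ?_, ?_⟩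
  · intro i
    have hkey : {x | Q x = i} =
        s (e i) ∩ ⋂ j ∈ Finset.univ.filter
          (fun j : Fin (Fintype.card {c // c ∈ t}) => j < i), (s (e j))ᶜ := by
      ext x
      simp only [Set.mem_setOf_eq, Set.mem_inter_iff, Set.mem_iInter, Finset.mem_filter,
        Finset.mem_univ, true_and, Set.mem_compl_iff]
      constructor
      · intro h
        refine ⟨h ▸ hQmem x, fun j hj hxj => ?_⟩
        have := hQle x j hxj
        rw [h] at this
        exact absurd this (not_le.mpr hj)
      · rintro ⟨hxi, hlt⟩
        have h1 : Q x ≤ i := hQle x i hxi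
        rcases lt_or_eq_of_le h1 with h | h
        · exact absurd (hQmem x) (hlt _ h)
        · exact h
    rw [hkey]
    exact (hs _).2.inter (isOpen_biInter_finset fun j _ => (hs _).1.isOpen_compl)
  · intro x y hxy
    have hx := hQmem x
    have hy := hQmem y
    rw [← hxy] at hy
    have h1 := hsub _ hx
    have h2 := hsub _ hy
    rw [Metric.mem_ball] at h1 h2
    calc dist x y ≤ dist x (e (Q x) : X) + dist (e (Q x) : X) y := dist_triangle _ _ _
      _ ≤ ε := by rw [dist_comm (e (Q x) : X) y] at *; linarith

theorem stmt2
    (X : Type) [TopologicalSpace X] [CompactSpace X]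
    [TopologicalSpace.MetrizableSpace X] [Nonempty X]
    (hX : TopologicalSpace.IsTopologicalBasis {s : Set X | IsClopen s})
    (f : X → X) (hfc : Continuous f) (hfs : Function.Surjective f) :
    ∃ (V : ℕ → Type) (_ : ∀ n, Fintype (V n)) (E : ∀ n, V n → V n → Prop)
      (φ : ∀ n, V (n + 1) → V n),
      (∀ n, Nonempty (V n)) ∧ (∀ n, IsSurjDigraph (E n)) ∧
      (∀ n, IsCover (E (n + 1)) (E n) (φ n)) ∧
      ∃ g : InvLim V φ → InvLim V φ,
        (∀ x y, ERel E φ x y ↔ g x = y) ∧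
        Continuous[invLimTop V φ, invLimTop V φ] g ∧ Function.Surjective g ∧
        ∃ h : X → InvLim V φ, @IsHomeomorph X (InvLim V φ) _ (invLimTop V φ) h ∧
          ∀ x, h (f x) = g (h x) := by
  classical
  letI m : MetricSpace X := TopologicalSpace.metrizableSpaceMetric X
  choose F hF q hq1 hq2 using fun n : ℕ =>
    exists_fine_part X hX (1 / (n + 1 : ℝ)) (by positivity)
  have pmap_q : ∀ (n : ℕ) (x y : X), pmap F f q n x = pmap F f q n y → q n x = q n y := by
    intro n x y h
    exact praw_q F f q n x y (congrArg Subtype.val h)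
  have hsep : ∀ x y : X, (∀ n, pmap F f q n x = pmap F f q n y) → x = y := by
    intro x y h
    have hd : ∀ n : ℕ, dist x y ≤ 1 / (n + 1 : ℝ) :=
      fun n => hq2 n x y (pmap_q n x y (h n))
    have : dist x y ≤ 0 :=
      ge_of_tendsto' tendsto_one_div_add_atTop_nhds_zero_nat hd
    exact dist_le_zero.mp this
  have hkey : ∀ a b : X,
      (∀ n, Edge F f q n (pmap F f q n a) (pmap F f q n b)) → f a = b := by
    intro a b hab
    choose z hz1 hz2 using hab
    have hda : ∀ n : ℕ, dist (z n) a ≤ 1 / (n + 1 : ℝ) :=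
      fun n => hq2 n _ _ (pmap_q n _ _ (hz1 n))
    have hdb : ∀ n : ℕ, dist (f (z n)) b ≤ 1 / (n + 1 : ℝ) :=
      fun n => hq2 n _ _ (pmap_q n _ _ (hz2 n))
    have hza : Tendsto z atTop (𝓝 a) := by
      rw [tendsto_iff_dist_tendsto_zero]
      exact squeeze_zero (fun n => dist_nonneg) hda
        tendsto_one_div_add_atTop_nhds_zero_nat
    have hfa : Tendsto (fun n => f (z n)) atTop (𝓝 (f a)) :=
      ((hfc.tendsto a).comp hza)
    have hfb : Tendsto (fun n => f (z n)) atTop (𝓝 b) := by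
      rw [tendsto_iff_dist_tendsto_zero]
      exact squeeze_zero (fun n => dist_nonneg) hdb
        tendsto_one_div_add_atTop_nhds_zero_nat
    exact tendsto_nhds_unique hfa hfb
  letI tV : ∀ n, TopologicalSpace (Vt F f q n) := fun _ => ⊥
  haveI dV : ∀ n, DiscreteTopology (Vt F f q n) := fun _ => ⟨rfl⟩
  haveI finV : ∀ n, Finite (Vt F f q n) := by
    intro n
    have : Fintype (Wt F n) := wtFintype F hF n
    exact Subtype.finite
  have hpo : ∀ (n : ℕ) (v : Vt F f q n), IsOpen {x | pmap F f q n x = v} := by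
    intro n v
    have : {x | pmap F f q n x = v} = {x | praw F f q n x = v.1} := by
      ext x; exact Subtype.ext_iff
    rw [this]
    exact praw_fiber_open F f q hfc hq1 n v.1
  have hpc : ∀ (n : ℕ) (v : Vt F f q n), IsClosed {x | pmap F f q n x = v} := by
    intro n v
    have : {x | pmap F f q n x = v} = {x | praw F f q n x = v.1} := by
      ext x; exact Subtype.ext_iff
    rw [this]
    exact praw_fiber_closed F f q hfc hq1 n v.1
  have hpcont : ∀ n, Continuous (pmap F f q n) := by
    intro n
    rw [continuous_discrete_rng]
    intro v
    exact hpo n v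
  set h : X → InvLim (Vt F f q) (φmap F f q) :=
    fun x => ⟨fun n => pmap F f q n x, fun n => φmap_pmap F f q n x⟩ with hh
  have hinj : Function.Injective h := by
    intro x y hxy
    exact hsep x y fun n => congrFun (congrArg Subtype.val hxy) n
  have hsurj : Function.Surjective h := by
    rintro ⟨u, hu⟩
    have hne : ∀ n, {x | pmap F f q n x = u n}.Nonempty := by
      intro n
      exact (pmap_surj F f q n (u n)).imp fun x hx => hx
    have hnest : ∀ n,
        {x | pmap F f q (n+1) x = u (n+1)} ⊆ {x | pmap F f q n x = u n} := by
      intro n x hx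
      have h2 : φmap F f q n (pmap F f q (n+1) x) = φmap F f q n (u (n + 1)) :=
        congrArg _ hx
      rw [φmap_pmap, hu n] at h2
      exact h2
    obtain ⟨x, hx⟩ := IsCompact.nonempty_iInter_of_sequence_nonempty_isCompact_isClosed
      _ hnest hne ((hpc 0 (u 0)).isCompact) (fun n => hpc n (u n))
    refine ⟨x, Subtype.ext (funext fun n => ?_)⟩
    exact Set.mem_iInter.mp hx n
  have hcont : Continuous h := by
    refine Continuous.subtype_mk (continuous_pi fun n => ?_) _
    exact hpcont n
  letI tI : TopologicalSpace (InvLim (Vt F f q) (φmap F f q)) :=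
    @instTopologicalSpaceSubtype _ _ (@Pi.topologicalSpace ℕ (Vt F f q) tV)
  haveI : T2Space (InvLim (Vt F f q) (φmap F f q)) := by
    infer_instance
  let eqv : X ≃ InvLim (Vt F f q) (φmap F f q) := Equiv.ofBijective h ⟨hinj, hsurj⟩
  have heqc : Continuous eqv := hcont
  let homeo : X ≃ₜ InvLim (Vt F f q) (φmap F f q) :=
    Continuous.homeoOfEquivCompactToT2 heqc
  set g : InvLim (Vt F f q) (φmap F f q) → InvLim (Vt F f q) (φmap F f q) :=
    fun z => homeo (f (homeo.symm z)) with hg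
  refine ⟨Vt F f q, fun n => @Fintype.ofFinite _ (finV n), Edge F f q, φmap F f q,
    ?_, ?_, ?_, ?_⟩
  · exact fun n => ⟨pmap F f q n (Classical.arbitrary X)⟩
  · intro n
    constructor
    · rintro v
      obtain ⟨x, hx⟩ := pmap_surj F f q n v
      obtain ⟨y, rfl⟩ := hfs x
      exact ⟨pmap F f q n y, y, rfl, hx⟩
    · rintro u
      obtain ⟨x, hx⟩ := pmap_surj F f q n u
      exact ⟨pmap F f q n (f x), x, hx, rfl⟩
  · intro n
    refine ⟨?_, ?_, ?_⟩
    · rintro u v ⟨x, rfl, rfl⟩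
      exact ⟨x, φmap_pmap F f q n x, φmap_pmap F f q n (f x)⟩
    · rintro u v v' ⟨x, rfl, rfl⟩ ⟨x', hx', rfl⟩
      have hx'' : ψmap F f q n (pmap F f q (n+1) x') = ψmap F f q n (pmap F f q (n+1) x) :=
        congrArg _ hx'
      rw [ψmap_pmap, ψmap_pmap] at hx''
      show φmap F f q n (pmap F f q (n+1) (f x)) = φmap F f q n (pmap F f q (n+1) (f x'))
      rw [φmap_pmap, φmap_pmap, hx'']
    · rintro u v ⟨x, rfl, rfl⟩
      exact ⟨pmap F f q (n+1) x, pmap F f q (n+1) (f x), ⟨x, rfl, rfl⟩,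
        φmap_pmap F f q n x, φmap_pmap F f q n (f x)⟩
  · refine ⟨g, ?_, ?_, ?_, h, ?_, ?_⟩
    · intro x y
      have hx : h (homeo.symm x) = x := homeo.apply_symm_apply x
      have hy : h (homeo.symm y) = y := homeo.apply_symm_apply y
      constructor
      · intro hER
        have hfab : f (homeo.symm x) = homeo.symm y := by
          apply hkey
          intro n
          have h3 := hER n
          rw [← hx, ← hy] at h3
          exact h3
        show homeo (f (homeo.symm x)) = y
        rw [hfab]
        exact homeo.apply_symm_apply y
      · intro hgx
        intro n
        have hyy : y = h (f (homeo.symm x)) := by rw [← hgx]; rfl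
        rw [← hx, hyy]
        exact ⟨homeo.symm x, rfl, rfl⟩
    · show Continuous g
      exact homeo.continuous.comp (hfc.comp homeo.symm.continuous)
    · intro y
      exact ⟨homeo ((hfs (homeo.symm y)).choose), by
        show homeo (f (homeo.symm (homeo _))) = y
        rw [homeo.symm_apply_apply, (hfs (homeo.symm y)).choose_spec,
          homeo.apply_symm_apply]⟩
    · exact homeo.isHomeomorph
    · intro x
      show h (f x) = homeo (f (homeo.symm (homeo x)))
      rw [homeo.symm_apply_apply]
      rfl
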